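/- Let N ≥ 1 and K̄ ≥ 1 be natural numbers, K = N·K̄, and let a : Fin K → ℝ be monotone (a_i ≤ a_j whenever i ≤ j). Let C_1, …, C_N be a partition of Fin K into N pairwise disjoint sets each of cardinality K̄. Then for every i with 1 ≤ i ≤ N, the number of clusters whose maximum is strictly less than a_{i·K̄ − 1} (0-based index) is at most i − 1; equivalently, at least N − i + 1 clusters C_n satisfy max_{k∈C_n} a_k ≥ a_{i·K̄ − 1}. -/

import Mathlib

open scoped Classical

/-- Counting step in the proof of Theorem 1: at most i - 1 clusters have maximum
strictly below the (i·Kb)-th smallest value; equivalently at least N - i + 1 clusters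
have maximum at least that value. -/
theorem stmt_5 (N Kb : ℕ) (hN : 1 ≤ N) (hKb : 1 ≤ Kb)
    (a : Fin (N * Kb) → ℝ) (ha : Monotone a)
    (C : Fin N → Finset (Fin (N * Kb)))
    (hdisj : ∀ i j : Fin N, i ≠ j → Disjoint (C i) (C j))
    (hcard : ∀ n : Fin N, (C n).card = Kb)
    (hcover : ∀ k : Fin (N * Kb), ∃ n : Fin N, k ∈ C n)
    (i : ℕ) (hi1 : 1 ≤ i) (hiN : i ≤ N) :
    (Finset.univ.filter (fun n : Fin N =>
        (C n).sup' (Finset.card_pos.mp (by rw [hcard n]; omega)) a <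
          a ⟨i * Kb - 1, by
            have h2 : i * Kb ≤ N * Kb := Nat.mul_le_mul_right _ hiN
            have h3 : 1 * 1 ≤ i * Kb := Nat.mul_le_mul hi1 hKb
            omega⟩)).card ≤ i - 1 ∧
      N - i + 1 ≤ (Finset.univ.filter (fun n : Fin N =>
          a ⟨i * Kb - 1, by
            have h2 : i * Kb ≤ N * Kb := Nat.mul_le_mul_right _ hiN
            have h3 : 1 * 1 ≤ i * Kb := Nat.mul_le_mul hi1 hKb
            omega⟩ ≤
            (C n).sup' (Finset.card_pos.mp (by rw [hcard n]; omega)) a)).card := by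
  
  have h2 : i * Kb ≤ N * Kb := Nat.mul_le_mul_right _ hiN
  have h3 : 1 * 1 ≤ i * Kb := Nat.mul_le_mul hi1 hKb
  set m : Fin (N * Kb) := ⟨i * Kb - 1, by omega⟩ with hm
  have hne : ∀ n : Fin N, (C n).Nonempty :=
    fun n => Finset.card_pos.mp (by rw [hcard n]; omega)
  set S := Finset.univ.filter (fun n : Fin N => (C n).sup' (hne n) a < a m) with hS
  -- main bound: |S| ≤ i - 1
  have hmain : S.card ≤ i - 1 := by
    by_contra h
    push_neg at h
    have hSi : i ≤ S.card := by omega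
    have hsub : S.biUnion C ⊆ Finset.Iio m := by
      intro k hk
      simp only [Finset.mem_biUnion] at hk
      obtain ⟨n, hnS, hkn⟩ := hk
      have hsup : (C n).sup' (hne n) a < a m := (Finset.mem_filter.mp hnS).2
      have hak : a k ≤ (C n).sup' (hne n) a := Finset.le_sup' a hkn
      have : a k < a m := lt_of_le_of_lt hak hsup
      have : k < m := by
        by_contra hkm
        push_neg at hkm
        exact absurd (ha hkm) (not_le.mpr this)
      simpa [Finset.mem_Iio] using this
    have hcardU : (S.biUnion C).card = S.card * Kb := by
      rw [Finset.card_biUnion (fun x _ y _ hxy => hdisj x y hxy)]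
      simp [hcard, Finset.sum_const, Nat.smul_one_eq_cast]
    have hIio : (Finset.Iio m).card = i * Kb - 1 := by
      simp [Fin.card_Iio, hm]
    have := Finset.card_le_card hsub
    rw [hcardU, hIio] at this
    have : i * Kb ≤ i * Kb - 1 :=
      le_trans (Nat.mul_le_mul_right _ hSi) this
    omega
  constructor
  · exact hmain
  · have hcompl : (Finset.univ.filter (fun n : Fin N =>
        a m ≤ (C n).sup' (hne n) a)).card = N - S.card := by
      have := Finset.card_filter_add_card_filter_not
        (s := (Finset.univ : Finset (Fin N)))
        (p := fun n : Fin N => (C n).sup' (hne n) a < a m)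
      simp only [Finset.card_univ, Fintype.card_fin, not_lt] at this
      rw [hS]
      omega
    rw [hcompl]
    omega
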